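/- arXiv:1504.08082 — 3 statements merged into one kernel-verified Lean document; each statement's English description precedes it below -/
import Mathlib

section
/- Let u : ℝⁿ → ℝ be Lipschitz with constant L. Then the function W̄(x) := sup_{‖v‖=ε} [ α u(x+v) + β ∫ u(x+z) dμ_v(z) ] is Lipschitz on ℝⁿ with Lipschitz constant at most 3L. -/
open MeasureTheory Metric Filter Set
open scoped RealInnerProductSpace ENNReal NNReal Topology Classical

noncomputable section

abbrev E (n : ℕ) : Type := EuclideanSpace ℝ (Fin n)

/-- The closed `(n-1)`-dimensional disk of radius `ε` orthogonal to `v`. -/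
def diskSet (n : ℕ) (ε : ℝ) (v : E n) : Set (E n) :=
  {z | ⟪z, v⟫ = 0 ∧ ‖z‖ ≤ ε}

/-- The uniform probability measure on `diskSet n ε v`: the `(n-1)`-dimensional
Hausdorff measure restricted to the disk, normalized to total mass 1. -/
def diskMeasure (n : ℕ) (ε : ℝ) (v : E n) : Measure (E n) :=
  (μH[(n : ℝ) - 1] (diskSet n ε v))⁻¹ • μH[(n : ℝ) - 1].restrict (diskSet n ε v)

/-- `Wfun n ε α β u x v = α u(x+v) + β ∫ u(x+z) dμ_v(z)`. -/
def Wfun (n : ℕ) (ε α β : ℝ) (u : E n → ℝ) (x v : E n) : ℝ :=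
  α * u (x + v) + β * ∫ z, u (x + z) ∂(diskMeasure n ε v)

lemma diskSet_measurable (n : ℕ) (ε : ℝ) (v : E n) : MeasurableSet (diskSet n ε v) := by
  have h1 : IsClosed {z : E n | ⟪z, v⟫ = 0} :=
    isClosed_eq (Continuous.inner continuous_id continuous_const) continuous_const
  have h2 : IsClosed {z : E n | ‖z‖ ≤ ε} := isClosed_le continuous_norm continuous_const
  exact (h1.inter h2).measurableSet

lemma diskMeasure_mass_le (n : ℕ) (ε : ℝ) (v : E n) :
    diskMeasure n ε v Set.univ ≤ 1 := by
  rw [diskMeasure, Measure.smul_apply, smul_eq_mul,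
    Measure.restrict_apply MeasurableSet.univ, Set.univ_inter]
  exact ENNReal.inv_mul_le_one _

instance diskMeasure_finite (n : ℕ) (ε : ℝ) (v : E n) :
    IsFiniteMeasure (diskMeasure n ε v) :=
  ⟨lt_of_le_of_lt (diskMeasure_mass_le n ε v) ENNReal.one_lt_top⟩

lemma diskMeasure_ae_mem (n : ℕ) (ε : ℝ) (v : E n) :
    ∀ᵐ z ∂(diskMeasure n ε v), z ∈ diskSet n ε v :=
  Measure.ae_smul_measure (ae_restrict_mem (diskSet_measurable n ε v)) _

lemma integrable_aux {n : ℕ} {ε : ℝ} (hε : 0 ≤ ε) {u : E n → ℝ} {L : ℝ≥0}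
    (hu : LipschitzWith L u) (x v : E n) :
    Integrable (fun z => u (x + z)) (diskMeasure n ε v) := by
  refine ⟨(hu.continuous.comp (continuous_const.add continuous_id)).aestronglyMeasurable, ?_⟩
  apply HasFiniteIntegral.of_bounded (C := |u x| + L * ε)
  filter_upwards [diskMeasure_ae_mem n ε v] with z hz
  have h := hu.dist_le_mul (x + z) x
  rw [show dist (x + z) x = ‖z‖ by rw [dist_eq_norm]; simp] at h
  have : dist (u (x + z)) (u x) ≤ L * ε := h.trans (by
    have : ‖z‖ ≤ ε := hz.2
    exact mul_le_mul_of_nonneg_left this L.coe_nonneg)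
  calc ‖u (x + z)‖ ≤ ‖u x‖ + dist (u (x + z)) (u x) := by
        rw [Real.dist_eq, Real.norm_eq_abs, Real.norm_eq_abs]
        have := abs_sub_abs_le_abs_sub (u (x + z)) (u x)
        linarith [abs_sub_comm (u (x + z)) (u x)]
    _ ≤ |u x| + L * ε := by rw [Real.norm_eq_abs]; linarith

lemma integral_diff_le {n : ℕ} {ε : ℝ} (hε : 0 ≤ ε) {u : E n → ℝ} {L : ℝ≥0}
    (hu : LipschitzWith L u) (x y v : E n) :
    |(∫ z, u (x + z) ∂(diskMeasure n ε v)) - ∫ z, u (y + z) ∂(diskMeasure n ε v)|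
      ≤ L * dist x y := by
  rw [← integral_sub (integrable_aux hε hu x v) (integrable_aux hε hu y v)]
  have hb : ∀ᵐ z ∂(diskMeasure n ε v), ‖u (x + z) - u (y + z)‖ ≤ (L : ℝ) * dist x y := by
    filter_upwards with z
    have := hu.dist_le_mul (x + z) (y + z)
    rw [dist_add_right] at this
    simpa [Real.dist_eq, Real.norm_eq_abs] using this
  have h := norm_integral_le_of_norm_le_const hb
  rw [Real.norm_eq_abs] at h
  refine h.trans ?_
  have hm : ((diskMeasure n ε v) Set.univ).toReal ≤ 1 :=
    ENNReal.toReal_le_of_le_ofReal zero_le_one (by simpa using diskMeasure_mass_le n ε v)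
  have hC : 0 ≤ (L : ℝ) * dist x y := mul_nonneg L.coe_nonneg dist_nonneg
  nlinarith [mul_le_of_le_one_right hC (show (diskMeasure n ε v).real Set.univ ≤ 1 from hm)]

lemma wfun_dist_le {n : ℕ} {ε : ℝ} (hε : 0 ≤ ε) {α β : ℝ} (hα : 0 ≤ α) (hβ : 0 ≤ β)
    (hαβ : α + β = 1) {u : E n → ℝ} {L : ℝ≥0} (hu : LipschitzWith L u) (x y v : E n) :
    Wfun n ε α β u x v ≤ Wfun n ε α β u y v + L * dist x y := by
  have h1 : |u (x + v) - u (y + v)| ≤ L * dist x y := by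
    have := hu.dist_le_mul (x + v) (y + v)
    rw [dist_add_right] at this
    simpa [Real.dist_eq] using this
  have h2 := integral_diff_le hε hu x y v
  rw [Wfun, Wfun]
  have e1 : u (x + v) ≤ u (y + v) + L * dist x y := by
    have := abs_le.1 h1; linarith [this.2]
  have e2 : (∫ z, u (x + z) ∂(diskMeasure n ε v))
      ≤ (∫ z, u (y + z) ∂(diskMeasure n ε v)) + L * dist x y := by
    have := abs_le.1 h2; linarith [this.2]
  have p1 := mul_le_mul_of_nonneg_left e1 hα
  have p2 := mul_le_mul_of_nonneg_left e2 hβ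
  rw [mul_add] at p1 p2
  have hsum : α * ((L : ℝ) * dist x y) + β * ((L : ℝ) * dist x y) = (L : ℝ) * dist x y := by
    rw [← add_mul, hαβ, one_mul]
  linarith

lemma wfun_bdd {n : ℕ} {ε : ℝ} (hε : 0 ≤ ε) {α β : ℝ} (hα : 0 ≤ α) (hβ : 0 ≤ β)
    (hαβ : α + β = 1) {u : E n → ℝ} {L : ℝ≥0} (hu : LipschitzWith L u) (x : E n) :
    ∀ v : sphere (0 : E n) ε, Wfun n ε α β u x (v : E n) ≤ |u x| + L * ε := by
  intro v
  have hv : ‖(v : E n)‖ = ε := by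
    have := v.2; rwa [mem_sphere_iff_norm, sub_zero] at this
  have h1 : |u (x + (v : E n))| ≤ |u x| + L * ε := by
    have h := hu.dist_le_mul (x + (v : E n)) x
    rw [show dist (x + (v : E n)) x = ‖(v : E n)‖ by rw [dist_eq_norm]; simp, hv] at h
    have := abs_sub_abs_le_abs_sub (u (x + (v : E n))) (u x)
    rw [← Real.dist_eq] at this
    linarith
  have h2 : |∫ z, u (x + z) ∂(diskMeasure n ε (v : E n))| ≤ |u x| + L * ε := by
    have hb : ∀ᵐ z ∂(diskMeasure n ε (v : E n)), ‖u (x + z)‖ ≤ |u x| + L * ε := by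
      filter_upwards [diskMeasure_ae_mem n ε (v : E n)] with z hz
      have h := hu.dist_le_mul (x + z) x
      rw [show dist (x + z) x = ‖z‖ by rw [dist_eq_norm]; simp] at h
      have hz' : (L : ℝ) * ‖z‖ ≤ L * ε := mul_le_mul_of_nonneg_left hz.2 L.coe_nonneg
      have := abs_sub_abs_le_abs_sub (u (x + z)) (u x)
      rw [← Real.dist_eq] at this
      rw [Real.norm_eq_abs]; linarith
    have h := norm_integral_le_of_norm_le_const hb
    rw [Real.norm_eq_abs] at h
    have hm : ((diskMeasure n ε (v : E n)) Set.univ).toReal ≤ 1 :=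
      ENNReal.toReal_le_of_le_ofReal zero_le_one (by simpa using diskMeasure_mass_le n ε (v : E n))
    have hC : (0 : ℝ) ≤ |u x| + L * ε :=
      add_nonneg (abs_nonneg _) (mul_nonneg L.coe_nonneg hε)
    exact h.trans (mul_le_of_le_one_right hC hm)
  have e1 := (abs_le.1 h1).2
  have e2 := (abs_le.1 h2).2
  rw [Wfun]
  have p1 := mul_le_mul_of_nonneg_left e1 hα
  have p2 := mul_le_mul_of_nonneg_left e2 hβ
  have hsum : α * (|u x| + (L : ℝ) * ε) + β * (|u x| + (L : ℝ) * ε) = |u x| + (L : ℝ) * ε := by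
    rw [← add_mul, hαβ, one_mul]
  linarith

theorem stmt_1 (n : ℕ) (hn : 2 ≤ n) (ε : ℝ) (hε : 0 < ε)
    (α β : ℝ) (hα : 0 ≤ α) (hβ : 0 ≤ β) (hαβ : α + β = 1)
    (u : E n → ℝ) (L : ℝ≥0) (hu : LipschitzWith L u) :
    LipschitzWith (3 * L)
      (fun x => ⨆ v : sphere (0 : E n) ε, Wfun n ε α β u x (v : E n)) := by
  have hε' : 0 ≤ ε := hε.le
  have hnt : Nontrivial (E n) := by
    have : 0 < Module.finrank ℝ (E n) := by
      rw [finrank_euclideanSpace_fin]; omega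
    exact Module.nontrivial_of_finrank_pos this
  have hne : Nonempty (sphere (0 : E n) ε) := by
    rw [nonempty_coe_sort]
    exact NormedSpace.sphere_nonempty.2 hε'
  refine LipschitzWith.of_dist_le_mul fun x y => ?_
  have hbdd : ∀ w : E n, BddAbove (Set.range fun v : sphere (0 : E n) ε =>
      Wfun n ε α β u w (v : E n)) := fun w =>
    ⟨|u w| + L * ε, by rintro _ ⟨v, rfl⟩; exact wfun_bdd hε' hα hβ hαβ hu w v⟩
  have key : ∀ a b : E n,
      (⨆ v : sphere (0 : E n) ε, Wfun n ε α β u a (v : E n))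
        ≤ (⨆ v : sphere (0 : E n) ε, Wfun n ε α β u b (v : E n)) + L * dist a b := by
    intro a b
    refine ciSup_le fun v => ?_
    calc Wfun n ε α β u a (v : E n) ≤ Wfun n ε α β u b (v : E n) + L * dist a b :=
          wfun_dist_le hε' hα hβ hαβ hu a b (v : E n)
      _ ≤ _ := add_le_add_left (le_ciSup (hbdd b) v) _
  have h1 := key x y
  have h2 := key y x
  rw [dist_comm y x] at h2
  rw [Real.dist_eq, abs_le]
  push_cast
  have hL : (0 : ℝ) ≤ L * dist x y := mul_nonneg L.coe_nonneg dist_nonneg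
  constructor <;> nlinarith [L.coe_nonneg, dist_nonneg (x := x) (y := y)]
end
end

section
/- Let u : ℝⁿ → ℝ be Lipschitz with constant L. Then the function W̲(x) := inf_{‖v‖=ε} [ α u(x+v) + β ∫ u(x+z) dμ_v(z) ] is Lipschitz on ℝⁿ with Lipschitz constant at most 3L. -/
open MeasureTheory Metric Filter Set
open scoped RealInnerProductSpace ENNReal NNReal Topology Classical

noncomputable section

section Aux

variable {n : ℕ} {ε : ℝ} {v : E n}

lemma measurableSet_diskSet : MeasurableSet (diskSet n ε v) := by
  have h1 : IsClosed {z : E n | ⟪z, v⟫ = 0} :=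
    isClosed_eq (continuous_id.inner continuous_const) continuous_const
  have h2 : IsClosed {z : E n | ‖z‖ ≤ ε} := isClosed_le continuous_norm continuous_const
  exact (h1.inter h2).measurableSet

lemma diskMeasure_eq_zero_of_zero (h : μH[(n : ℝ) - 1] (diskSet n ε v) = 0) :
    diskMeasure n ε v = 0 := by
  rw [diskMeasure, Measure.restrict_eq_zero.mpr h, smul_zero]

lemma diskMeasure_eq_zero_of_top (h : μH[(n : ℝ) - 1] (diskSet n ε v) = ∞) :
    diskMeasure n ε v = 0 := by
  rw [diskMeasure, h, ENNReal.inv_top, zero_smul]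

lemma isProbabilityMeasure_diskMeasure (h0 : μH[(n : ℝ) - 1] (diskSet n ε v) ≠ 0)
    (htop : μH[(n : ℝ) - 1] (diskSet n ε v) ≠ ∞) :
    IsProbabilityMeasure (diskMeasure n ε v) := by
  constructor
  rw [diskMeasure, Measure.smul_apply, Measure.restrict_apply_univ, smul_eq_mul,
    ENNReal.inv_mul_cancel h0 htop]

lemma ae_mem_diskSet : ∀ᵐ z ∂(diskMeasure n ε v), z ∈ diskSet n ε v := by
  rw [diskMeasure]
  exact Measure.ae_smul_measure (ae_restrict_mem measurableSet_diskSet) _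

lemma integrable_diskMeasure {u : E n → ℝ} {L : ℝ≥0} (hu : LipschitzWith L u)
    (h0 : μH[(n : ℝ) - 1] (diskSet n ε v) ≠ 0)
    (htop : μH[(n : ℝ) - 1] (diskSet n ε v) ≠ ∞) (x : E n) :
    Integrable (fun z => u (x + z)) (diskMeasure n ε v) := by
  haveI := isProbabilityMeasure_diskMeasure (v := v) (ε := ε) h0 htop
  apply Integrable.mono' (integrable_const (|u x| + L * ε))
  · exact (hu.continuous.comp (continuous_const.add continuous_id)).aestronglyMeasurable
  · filter_upwards [ae_mem_diskSet (v := v) (ε := ε)] with z hz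
    have h1 : dist (u (x + z)) (u x) ≤ L * dist (x + z) x := hu.dist_le_mul _ _
    have h2 : dist (x + z) x = ‖z‖ := by simp [dist_eq_norm]
    have h3 : ‖z‖ ≤ ε := hz.2
    have h4 : |u (x + z) - u x| ≤ L * ε := by
      rw [Real.dist_eq] at h1
      calc |u (x + z) - u x| ≤ L * dist (x + z) x := h1
        _ = L * ‖z‖ := by rw [h2]
        _ ≤ L * ε := by
          apply mul_le_mul_of_nonneg_left h3 L.coe_nonneg
    rw [Real.norm_eq_abs]
    calc |u (x + z)| = |u x + (u (x + z) - u x)| := by ring_nf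
      _ ≤ |u x| + |u (x + z) - u x| := abs_add_le _ _
      _ ≤ |u x| + L * ε := by linarith

/-- The key per-direction Lipschitz estimate. -/
lemma Wfun_dist_le {α β : ℝ} (hα : 0 ≤ α) (hβ : 0 ≤ β) (hαβ : α + β = 1)
    {u : E n → ℝ} {L : ℝ≥0} (hu : LipschitzWith L u) (x y : E n) :
    |Wfun n ε α β u x v - Wfun n ε α β u y v| ≤ L * dist x y := by
  have haux : |u (x + v) - u (y + v)| ≤ L * dist x y := by
    have := hu.dist_le_mul (x + v) (y + v)
    rw [Real.dist_eq] at this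
    calc |u (x + v) - u (y + v)| ≤ L * dist (x + v) (y + v) := this
      _ = L * dist x y := by rw [dist_add_right]
  have hint : |(∫ z, u (x + z) ∂(diskMeasure n ε v)) -
      ∫ z, u (y + z) ∂(diskMeasure n ε v)| ≤ L * dist x y := by
    by_cases h0 : μH[(n : ℝ) - 1] (diskSet n ε v) = 0
    · simp [diskMeasure_eq_zero_of_zero h0, mul_nonneg L.coe_nonneg dist_nonneg]
    by_cases htop : μH[(n : ℝ) - 1] (diskSet n ε v) = ∞
    · simp [diskMeasure_eq_zero_of_top htop, mul_nonneg L.coe_nonneg dist_nonneg]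
    haveI := isProbabilityMeasure_diskMeasure (v := v) (ε := ε) h0 htop
    have hix := integrable_diskMeasure hu h0 htop x
    have hiy := integrable_diskMeasure hu h0 htop y
    rw [← integral_sub hix hiy]
    have hb : ∀ᵐ z ∂(diskMeasure n ε v), ‖u (x + z) - u (y + z)‖ ≤ L * dist x y := by
      filter_upwards with z
      have := hu.dist_le_mul (x + z) (y + z)
      rw [Real.dist_eq] at this
      rw [Real.norm_eq_abs]
      calc |u (x + z) - u (y + z)| ≤ L * dist (x + z) (y + z) := this
        _ = L * dist x y := by rw [dist_add_right]
    have := norm_integral_le_of_norm_le_const (μ := diskMeasure n ε v)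
      (f := fun z => u (x + z) - u (y + z)) (C := L * dist x y) hb
    simpa [Real.norm_eq_abs, measure_univ] using this
  have : Wfun n ε α β u x v - Wfun n ε α β u y v =
      α * (u (x + v) - u (y + v)) +
      β * ((∫ z, u (x + z) ∂(diskMeasure n ε v)) - ∫ z, u (y + z) ∂(diskMeasure n ε v)) := by
    rw [Wfun, Wfun]; ring
  rw [this]
  set A := u (x + v) - u (y + v) with hA
  set I := (∫ z, u (x + z) ∂(diskMeasure n ε v)) - ∫ z, u (y + z) ∂(diskMeasure n ε v) with hI
  calc |α * A + β * I| ≤ |α * A| + |β * I| := abs_add_le _ _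
    _ = α * |A| + β * |I| := by
        rw [abs_mul, abs_mul, abs_of_nonneg hα, abs_of_nonneg hβ]
    _ ≤ α * (L * dist x y) + β * (L * dist x y) := by gcongr
    _ = L * dist x y := by rw [← add_mul, hαβ, one_mul]

/-- Lower bound for `Wfun` over directions on the sphere. -/
lemma Wfun_lower_bound {α β : ℝ} (hα : 0 ≤ α) (hβ : 0 ≤ β) (hαβ : α + β = 1)
    {u : E n → ℝ} {L : ℝ≥0} (hu : LipschitzWith L u) (x : E n) (hv : ‖v‖ = ε) :
    -(|u x| + L * ε) ≤ Wfun n ε α β u x v := by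
  set B : ℝ := -(|u x| + L * ε) with hB
  have hε0 : 0 ≤ ε := hv ▸ norm_nonneg v
  have h1 : B ≤ u (x + v) := by
    have := hu.dist_le_mul (x + v) x
    rw [Real.dist_eq] at this
    have h2 : dist (x + v) x = ‖v‖ := by simp [dist_eq_norm]
    have h3 : |u (x + v) - u x| ≤ L * ε := by
      rw [h2, hv] at this; exact this
    have h4 : -|u x| ≤ u x := neg_abs_le _
    have := abs_le.mp h3
    simp only [hB]
    linarith
  have h2 : B ≤ ∫ z, u (x + z) ∂(diskMeasure n ε v) := by
    by_cases h0 : μH[(n : ℝ) - 1] (diskSet n ε v) = 0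
    · rw [diskMeasure_eq_zero_of_zero h0]
      simp only [integral_zero_measure, hB]
      have := mul_nonneg L.coe_nonneg hε0
      have := abs_nonneg (u x)
      linarith
    by_cases htop : μH[(n : ℝ) - 1] (diskSet n ε v) = ∞
    · rw [diskMeasure_eq_zero_of_top htop]
      simp only [integral_zero_measure, hB]
      have := mul_nonneg L.coe_nonneg hε0
      have := abs_nonneg (u x)
      linarith
    haveI := isProbabilityMeasure_diskMeasure (v := v) (ε := ε) h0 htop
    have hix := integrable_diskMeasure hu h0 htop x
    have : (B : ℝ) = ∫ _, B ∂(diskMeasure n ε v) := by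
      rw [integral_const]; simp
    rw [this]
    apply integral_mono_ae (integrable_const _) hix
    filter_upwards [ae_mem_diskSet (v := v) (ε := ε)] with z hz
    have := hu.dist_le_mul (x + z) x
    rw [Real.dist_eq] at this
    have hd : dist (x + z) x = ‖z‖ := by simp [dist_eq_norm]
    have h3 : |u (x + z) - u x| ≤ L * ε := by
      rw [hd] at this
      calc |u (x + z) - u x| ≤ L * ‖z‖ := this
        _ ≤ L * ε := mul_le_mul_of_nonneg_left hz.2 L.coe_nonneg
    have h4 : -|u x| ≤ u x := neg_abs_le _
    have := abs_le.mp h3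
    simp only [hB]
    linarith
  calc B = α * B + β * B := by rw [← add_mul, hαβ, one_mul]
    _ ≤ α * u (x + v) + β * ∫ z, u (x + z) ∂(diskMeasure n ε v) := by gcongr
    _ = Wfun n ε α β u x v := rfl

end Aux

theorem stmt_2 (n : ℕ) (hn : 2 ≤ n) (ε : ℝ) (hε : 0 < ε)
    (α β : ℝ) (hα : 0 ≤ α) (hβ : 0 ≤ β) (hαβ : α + β = 1)
    (u : E n → ℝ) (L : ℝ≥0) (hu : LipschitzWith L u) :
    LipschitzWith (3 * L)
      (fun x => ⨅ v : sphere (0 : E n) ε, Wfun n ε α β u x (v : E n)) := by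
  have hne : Nonempty (sphere (0 : E n) ε) := by
    refine ⟨⟨EuclideanSpace.single (⟨0, by omega⟩ : Fin n) ε, ?_⟩⟩
    rw [mem_sphere_zero_iff_norm, EuclideanSpace.norm_single]
    exact abs_of_pos hε
  have hbdd : ∀ x : E n, BddBelow (range fun v : sphere (0 : E n) ε =>
      Wfun n ε α β u x (v : E n)) := by
    intro x
    refine ⟨-(|u x| + L * ε), ?_⟩
    rintro _ ⟨v, rfl⟩
    exact Wfun_lower_bound hα hβ hαβ hu x (mem_sphere_zero_iff_norm.mp v.2)
  apply LipschitzWith.of_dist_le_mul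
  intro x y
  rw [Real.dist_eq]
  have key : ∀ a b : E n,
      (⨅ v : sphere (0 : E n) ε, Wfun n ε α β u a (v : E n)) -
        (⨅ v : sphere (0 : E n) ε, Wfun n ε α β u b (v : E n)) ≤ L * dist a b := by
    intro a b
    have h : ∀ v : sphere (0 : E n) ε,
        (⨅ w : sphere (0 : E n) ε, Wfun n ε α β u a (w : E n)) - L * dist a b ≤
          Wfun n ε α β u b (v : E n) := by
      intro v
      have h1 : (⨅ w : sphere (0 : E n) ε, Wfun n ε α β u a (w : E n)) ≤
          Wfun n ε α β u a (v : E n) := ciInf_le (hbdd a) v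
      have h2 := abs_le.mp (Wfun_dist_le (n := n) (ε := ε) (v := (v : E n)) hα hβ hαβ hu a b)
      linarith
    have := le_ciInf h
    linarith
  have h1 := key x y
  have h2 := key y x
  rw [dist_comm] at h2
  have h3 : (L : ℝ) * dist x y ≤ (3 * L : ℝ≥0) * dist x y := by
    push_cast
    nlinarith [dist_nonneg (x := x) (y := y), L.coe_nonneg]
  rw [abs_sub_le_iff]
  constructor <;> linarith
end
end

section
/- There exists a constant C > 0, independent of the vectors involved, such that for any two unit vectors v₁, v₂ ∈ ℝⁿ there is a linear isometry (rotation) L : ℝⁿ → ℝⁿ with L(v₁) = v₂ (so L maps the orthogonal complement v₁^⊥ onto v₂^⊥) and ‖L(z) − z‖ ≤ C·‖z‖·‖v₁ − v₂‖ for all z ∈ ℝⁿ. -/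
open Metric
open scoped RealInnerProductSpace

noncomputable section

set_option maxHeartbeats 1600000 in
theorem stmt_7 (n : ℕ) (hn : 2 ≤ n) :
    ∃ C : ℝ, 0 < C ∧ ∀ v₁ v₂ : E n, ‖v₁‖ = 1 → ‖v₂‖ = 1 →
      ∃ L : E n ≃ₗᵢ[ℝ] E n, L v₁ = v₂ ∧
        ∀ z : E n, ‖L z - z‖ ≤ C * ‖z‖ * ‖v₁ - v₂‖ := by
  have hrefl : ∀ v x : E n, Submodule.reflection (ℝ ∙ v) x = (2 * ⟪v, x⟫ / ‖v‖ ^ 2) • v - x := by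
    intro v x
    rw [Submodule.reflection_singleton_apply]
    simp only [RCLike.ofReal_real_eq_id, id_eq]
    rw [← Nat.cast_smul_eq_nsmul ℝ, smul_smul, Nat.cast_ofNat, mul_div_assoc]
  refine ⟨3, by norm_num, fun v₁ v₂ h1 h2 => ?_⟩
  set u : E n := v₁ + v₂ with hu
  set t : ℝ := ⟪v₁, v₂⟫ with htdef
  have hu2 : ‖u‖ ^ 2 = 2 + 2 * t := by
    rw [hu, norm_add_sq_real, h1, h2]; ring
  have hw2 : ‖v₁ - v₂‖ ^ 2 = 2 - 2 * t := by
    rw [norm_sub_sq_real, h1, h2]; ring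
  have huv1 : ⟪u, v₁⟫ = 1 + t := by
    rw [hu, inner_add_left, real_inner_self_eq_norm_sq, h1, real_inner_comm]
    rw [← htdef]; ring
  have huv2 : ⟪v₂, u⟫ = 1 + t := by
    rw [hu, inner_add_right, real_inner_self_eq_norm_sq, h2, real_inner_comm]
    rw [← htdef]; ring
  clear_value u t
  have hwpos : (0:ℝ) ≤ ‖v₁ - v₂‖ := norm_nonneg _
  have ht2 : t ≤ 1 := by nlinarith [sq_nonneg ‖v₁ - v₂‖]
  by_cases hu0 : u = 0
  · -- antipodal case: v₂ = -v₁
    have hv2 : v₂ = -v₁ := by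
      have h := hu0; rw [hu] at h; linear_combination (norm := abel) h
    refine ⟨Submodule.reflection ((ℝ ∙ v₁)ᗮ), ?_, ?_⟩
    · have hmem : v₁ ∈ ((ℝ ∙ v₁)ᗮ)ᗮ :=
        Submodule.le_orthogonal_orthogonal _ (Submodule.mem_span_singleton_self v₁)
      rw [Submodule.reflection_mem_subspace_orthogonalComplement_eq_neg hmem, hv2]
    · intro z
      have hwn : ‖v₁ - v₂‖ = 2 := by
        rw [hv2, sub_neg_eq_add, ← two_smul ℝ, norm_smul, h1]; norm_num
      have h3 := norm_sub_le (Submodule.reflection ((ℝ ∙ v₁)ᗮ) z) z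
      rw [LinearIsometryEquiv.norm_map] at h3
      rw [hwn]
      linarith [norm_nonneg z]
  · -- main case
    have hun : 0 < ‖u‖ := norm_pos_iff.mpr hu0
    have ht : 0 < 1 + t := by nlinarith
    have h1t : (1 + t) ≠ 0 := ne_of_gt ht
    have h2t : (2:ℝ) + 2 * t ≠ 0 := ne_of_gt (by linarith)
    set L : E n ≃ₗᵢ[ℝ] E n := (Submodule.reflection (ℝ ∙ v₁)).trans (Submodule.reflection (ℝ ∙ u)) with hL
    have hLv : L v₁ = v₂ := by
      rw [hL, LinearIsometryEquiv.trans_apply,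
        Submodule.reflection_mem_subspace_eq_self (Submodule.mem_span_singleton_self v₁),
        hrefl, huv1, hu2]
      have hc : 2 * (1 + t) / (2 + 2 * t) = 1 := by
        rw [div_eq_one_iff_eq h2t]; ring
      rw [hc, one_smul, hu]
      abel
    have key : ∀ z : E n, L z - z =
        (2 * ⟪v₁, z⟫) • v₂ - ((⟪v₁, z⟫ + ⟪v₂, z⟫) / (1 + t)) • u := by
      intro z
      rw [hL, LinearIsometryEquiv.trans_apply, hrefl, hrefl, h1]
      have huz : ⟪u, (2 * ⟪v₁, z⟫ / (1:ℝ)^2) • v₁ - z⟫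
          = 2 * ⟪v₁, z⟫ * (1 + t) - (⟪v₁, z⟫ + ⟪v₂, z⟫) := by
        rw [inner_sub_right, real_inner_smul_right, huv1, hu, inner_add_left]
        ring
      rw [huz, hu2, hu]
      set p : ℝ := ⟪v₁, z⟫ with hp
      set q : ℝ := ⟪v₂, z⟫ with hq
      clear_value p q
      match_scalars <;> field_simp [h1t, h2t] <;> ring
    clear_value L
    refine ⟨L, hLv, fun z => ?_⟩
    set a : ℝ := ⟪v₁, z⟫ with ha
    set b : ℝ := ⟪v₂, z⟫ with hb
    clear_value a b
    have hN : ‖L z - z‖ ^ 2 = 4 * a ^ 2 - 4 * a * (a + b) + 2 * (a + b) ^ 2 / (1 + t) := by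
      rw [key z, ← ha, ← hb, norm_sub_sq_real, real_inner_smul_left, real_inner_smul_right, huv2,
        norm_smul, norm_smul, h2]
      simp only [Real.norm_eq_abs, mul_pow, sq_abs, one_pow, mul_one]
      rw [hu2]
      field_simp [h1t, h2t]
      ring
    -- Cauchy-Schwarz facts
    have hZ : (0:ℝ) ≤ ‖z‖ := norm_nonneg z
    have haZ : a ^ 2 ≤ ‖z‖ ^ 2 := by
      have h := abs_real_inner_le_norm v₁ z
      rw [h1, one_mul, ← ha] at h
      calc a ^ 2 = |a| ^ 2 := (sq_abs a).symm
        _ ≤ ‖z‖ ^ 2 := pow_le_pow_left₀ (abs_nonneg a) h 2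
    have hbZ : b ^ 2 ≤ ‖z‖ ^ 2 := by
      have h := abs_real_inner_le_norm v₂ z
      rw [h2, one_mul, ← hb] at h
      calc b ^ 2 = |b| ^ 2 := (sq_abs b).symm
        _ ≤ ‖z‖ ^ 2 := pow_le_pow_left₀ (abs_nonneg b) h 2
    have habZ : (a - b) ^ 2 ≤ (2 - 2 * t) * ‖z‖ ^ 2 := by
      have h := abs_real_inner_le_norm (v₁ - v₂) z
      rw [inner_sub_left, ← ha, ← hb] at h
      calc (a - b) ^ 2 = |a - b| ^ 2 := (sq_abs _).symm
        _ ≤ (‖v₁ - v₂‖ * ‖z‖) ^ 2 := pow_le_pow_left₀ (abs_nonneg _) h 2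
        _ = (2 - 2 * t) * ‖z‖ ^ 2 := by rw [mul_pow, hw2]
    by_cases hsmall : 1 + t < 1 / 2
    · -- crude bound
      have hw1 : 1 ≤ ‖v₁ - v₂‖ := by nlinarith [hw2, hwpos, hsmall]
      have h3 := norm_sub_le (L z) z
      rw [LinearIsometryEquiv.norm_map] at h3
      linarith [mul_le_mul_of_nonneg_left hw1 hZ]
    · push_neg at hsmall
      have hfin : ‖L z - z‖ ^ 2 ≤ (3 * ‖z‖ * ‖v₁ - v₂‖) ^ 2 := by
        rw [hN, mul_pow, mul_pow, hw2]
        have expand : 4 * a ^ 2 - 4 * a * (a + b) + 2 * (a + b) ^ 2 / (1 + t)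
            = ((4 * a ^ 2 - 4 * a * (a + b)) * (1 + t) + 2 * (a + b) ^ 2) / (1 + t) := by
          field_simp
        rw [expand, div_le_iff₀ ht]
        have k1 : (0:ℝ) ≤ 1 - t := by linarith
        have e2 := mul_nonneg k1 (sq_nonneg (a - b))
        have e3 : a ^ 2 + b ^ 2 ≤ 2 * ‖z‖ ^ 2 := by linarith
        have e5 := mul_le_mul_of_nonneg_right e3 k1
        have k2 : (0:ℝ) ≤ 2 - 2 * t := by linarith
        have k3 : (0:ℝ) ≤ 9 * (1 + t) - 4 := by linarith
        have k4 : (0:ℝ) ≤ ‖z‖ ^ 2 := sq_nonneg ‖z‖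
        have h6 : (0:ℝ) ≤ ((2 - 2 * t) * ‖z‖ ^ 2) * (9 * (1 + t) - 4) :=
          mul_nonneg (mul_nonneg k2 k4) k3
        nlinarith [habZ, e2, e5, h6]
      have hsq := Real.sqrt_le_sqrt hfin
      rwa [Real.sqrt_sq (norm_nonneg _), Real.sqrt_sq (by positivity)] at hsq
end
end
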